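/- Let w be a well-formed expression of length n. Then for every k with 0 < k < n, the k-rotation of w is not a well-formed expression. -/

import Mathlib

/-- `C v` is the length of `v` minus the sum of its entries. -/
def C (v : List ℕ) : ℤ := (v.length : ℤ) - (v.sum : ℤ)

/-- A list of natural numbers is a well-formed expression (Polish notation
encoding of an ordered rooted tree by outdegrees) if it is of the form
`d :: (w₁ ++ ⋯ ++ w_d)` where each `wᵢ` is a well-formed expression. -/
inductive IsWF : List ℕ → Prop
  | node (d : ℕ) (ws : List (List ℕ)) (hlen : ws.length = d)
      (h : ∀ w ∈ ws, IsWF w) : IsWF (d :: ws.flatten)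

/-- The `k`-rotation of `s = u ++ v` with `v` of length `k` is `v ++ u`. -/
def krot (k : ℕ) (s : List ℕ) : List ℕ :=
  s.drop (s.length - k) ++ s.take (s.length - k)

lemma C_append (a b : List ℕ) : C (a ++ b) = C a + C b := by
  simp [C]; ring

lemma C_cons (d : ℕ) (l : List ℕ) : C (d :: l) = 1 - d + C l := by
  simp [C]; ring

def Good (w : List ℕ) : Prop :=
  C w = 1 ∧ ∀ p, p <+: w → p ≠ [] → p ≠ w → C p ≤ 0

lemma flat_C (ws : List (List ℕ)) (H : ∀ w ∈ ws, Good w) :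
    C ws.flatten = ws.length := by
  induction ws with
  | nil => simp [C]
  | cons a t ih =>
      simp only [List.flatten_cons, C_append, List.length_cons]
      rw [ih (fun w hw => H w (List.mem_cons_of_mem _ hw)),
        (H a (List.mem_cons_self)).1]
      push_cast; ring

lemma flat_bound (ws : List (List ℕ)) (H : ∀ w ∈ ws, Good w) :
    ∀ q, q <+: ws.flatten →
      C q ≤ ws.length ∧ (q ≠ ws.flatten → C q ≤ (ws.length : ℤ) - 1) := by
  induction ws with
  | nil =>
      intro q hq
      simp only [List.flatten_nil, List.prefix_nil] at hq
      subst hq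
      simp [C]
  | cons a t ih =>
      intro q hq
      have hm : q = ((a :: t).flatten).take q.length := List.prefix_iff_eq_take.1 hq
      set m := q.length with hmdef
      rw [List.flatten_cons, List.take_append] at hm
      by_cases hma : m ≤ a.length
      · have h2 : m - a.length = 0 := Nat.sub_eq_zero_of_le hma
        rw [h2, List.take_zero, List.append_nil] at hm
        have hqa : q <+: a := by rw [hm]; exact List.take_prefix _ _
        by_cases hqe : q = a
        · subst hqe
          have hC : C q = 1 := (H q (List.mem_cons_self)).1
          constructor
          · rw [hC]; simp only [List.length_cons]; push_cast; omega
          · intro hne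
            have htne : t ≠ [] := by
              rintro rfl
              simp at hne
            have : 1 ≤ t.length := List.length_pos_iff.2 htne
            rw [hC]; simp only [List.length_cons]; push_cast; omega
        · by_cases hqn : q = []
          · subst hqn
            have hc0 : C ([] : List ℕ) = 0 := by simp [C]
            constructor
            · rw [hc0]; positivity
            · intro _; rw [hc0]; simp only [List.length_cons]; push_cast; omega
          · have hC : C q ≤ 0 := (H a (List.mem_cons_self)).2 q hqa hqn hqe
            constructor
            · refine hC.trans ?_; positivity
            · intro _; refine hC.trans ?_; simp only [List.length_cons]; push_cast; omega
      · have h1 : a.take m = a := List.take_of_length_le (le_of_not_ge hma)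
        rw [h1] at hm
        set r := t.flatten.take (m - a.length) with hr
        have hrp : r <+: t.flatten := List.take_prefix _ _
        have ihr := ih (fun w hw => H w (List.mem_cons_of_mem _ hw)) r hrp
        have hCq : C q = 1 + C r := by
          rw [hm, C_append, (H a (List.mem_cons_self)).1]
        constructor
        · rw [hCq]; simp only [List.length_cons]; push_cast
          have := ihr.1; omega
        · intro hne
          have hrne : r ≠ t.flatten := by
            intro hre
            exact hne (by rw [hm, hre, List.flatten_cons])
          have := ihr.2 hrne
          rw [hCq]; simp only [List.length_cons]; push_cast; omega

lemma wf_good {w : List ℕ} (hw : IsWF w) : Good w := by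
  induction hw with
  | node d ws hlen h ih =>
      have hflat : C ws.flatten = ws.length := flat_C ws ih
      constructor
      · rw [C_cons, hflat, hlen]; ring
      · intro p hp hpn hpw
        obtain ⟨q, rfl, hq⟩ : ∃ q, p = d :: q ∧ q <+: ws.flatten := by
          cases p with
          | nil => exact absurd rfl hpn
          | cons x q =>
              obtain ⟨s, hs⟩ := hp
              injection hs with h1 h2
              exact ⟨q, by rw [h1], ⟨s, h2⟩⟩
        have hqne : q ≠ ws.flatten := fun h => hpw (by rw [h])
        have := (flat_bound ws ih q hq).2 hqne
        rw [C_cons, hlen] at *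
        omega

theorem stmt_4 (w : List ℕ) (hw : IsWF w) (k : ℕ) (hk0 : 0 < k)
    (hkn : k < w.length) : ¬ IsWF (krot k w) := by
  intro hr
  set u := w.take (w.length - k) with hu
  set v := w.drop (w.length - k) with hv
  have hw_eq : w = u ++ v := (List.take_append_drop _ _).symm
  have hul : u.length = w.length - k := by
    rw [hu, List.length_take]; omega
  have hvl : v.length = k := by
    rw [hv, List.length_drop]; omega
  have hune : u ≠ [] := by
    intro h; have := congrArg List.length h; simp [hul] at this; omega
  have hvne : v ≠ [] := by
    intro h; have := congrArg List.length h; simp [hvl] at this; omega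
  have hguw : Good w := wf_good hw
  have hCu : C u ≤ 0 := by
    refine hguw.2 u (List.take_prefix _ _) hune ?_
    intro h
    have := congrArg List.length h
    rw [hul] at this; omega
  have hgr : Good (v ++ u) := wf_good hr
  have hCv : C v ≤ 0 := by
    refine hgr.2 v (List.prefix_append _ _) hvne ?_
    intro h
    have h3 : v.length = v.length + u.length := by
      conv_lhs => rw [h]
      rw [List.length_append]
    exact hune (List.length_eq_zero_iff.1 (by omega))
  have h1 : C w = 1 := hguw.1
  have h2 : C (v ++ u) = 1 := hgr.1
  rw [hw_eq, C_append] at h1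
  rw [C_append] at h2
  omega
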